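/- Let Ch denote barycentric subdivision of finite simplicial complexes and let I be the standard 1-simplex (face poset of a 2-element set). In the inverse limit Ch^∞(I) of iterated barycentric subdivisions with bonding maps sending a chain to its maximum, the maximal points under the specialization order are in bijection with the points of the real interval [0,1]: each x ∈ [0,1] corresponds to the sequence (σₙˣ) where σₙˣ is the unique face of minimal dimension of the n-th barycentric subdivision whose geometric realization contains x. -/

import Mathlib

/-- Faces of the `n`-th dyadic (barycentric) subdivision of `[0,1]`:
`inl e` is the edge `[e/2ⁿ, (e+1)/2ⁿ]`, `inr v` is the vertex `v/2ⁿ`. -/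
def Face (n : ℕ) : Type := Fin (2 ^ n) ⊕ Fin (2 ^ n + 1)

/-- The geometric realization of a face of the `n`-th dyadic subdivision of `[0,1]`. -/
noncomputable def realF (n : ℕ) : Face n → Set ℝ
  | .inl e => Set.Icc ((e.1 : ℝ) / 2 ^ n) ((e.1 + 1 : ℝ) / 2 ^ n)
  | .inr v => {(v.1 : ℝ) / 2 ^ n}

/-- The inverse limit `Ch^∞(I)` of the iterated barycentric subdivisions of the standard
1-simplex: sequences of faces where `σₙ` is the smallest face of the `n`-th subdivision
containing the realization of `σₙ₊₁`. -/
def CLim : Type :=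
  {σ : (n : ℕ) → Face n //
    ∀ n, realF (n + 1) (σ (n + 1)) ⊆ realF n (σ n) ∧
      ∀ f : Face n, realF (n + 1) (σ (n + 1)) ⊆ realF n f → realF n (σ n) ⊆ realF n f}

/-- The specialization order on `Ch^∞(I)`: `σ ⪯ τ` iff `σₙ ≥ τₙ` for all `n` (the face order
being inclusion of realizations). -/
def SpecLe (σ τ : CLim) : Prop := ∀ n, realF n (τ.1 n) ⊆ realF n (σ.1 n)

/-- `σ` is a maximal point of `Ch^∞(I)` for the specialization order. -/
def IsMaxPt (σ : CLim) : Prop := ∀ τ : CLim, SpecLe σ τ → τ = σ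

namespace Stmt17Aux

lemma hp (n : ℕ) : (0:ℝ) < 2 ^ n := by positivity

lemma realF_inl (n : ℕ) (e : Fin (2 ^ n)) :
    realF n (Sum.inl e) = Set.Icc ((e.1 : ℝ) / 2 ^ n) ((e.1 + 1 : ℝ) / 2 ^ n) := rfl

lemma realF_inr (n : ℕ) (v : Fin (2 ^ n + 1)) :
    realF n (Sum.inr v) = {((v.1 : ℝ) / 2 ^ n)} := rfl

lemma edge_le (n : ℕ) (a : ℝ) : a / 2 ^ n ≤ (a + 1) / 2 ^ n := by
  rw [div_le_div_iff₀ (hp n) (hp n)]; nlinarith [hp n]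

lemma face_cases {n : ℕ} (g : Face n) :
    (∃ e : Fin (2 ^ n), g = Sum.inl e) ∨ (∃ v : Fin (2 ^ n + 1), g = Sum.inr v) :=
  match g with
  | .inl e => .inl ⟨e, rfl⟩
  | .inr v => .inr ⟨v, rfl⟩

/-- `x` is dyadic at level `n`. -/
def Dy (n : ℕ) (x : ℝ) : Prop := ∃ v : Fin (2 ^ n + 1), x = (v.1 : ℝ) / 2 ^ n

lemma floor_lemmas {n : ℕ} {x : ℝ} (hx0 : 0 ≤ x) (hx1 : x ≤ 1) (h : ¬ Dy n x) :
    ((⌊x * 2 ^ n⌋ : ℝ) < x * 2 ^ n ∧ x * 2 ^ n < ⌊x * 2 ^ n⌋ + 1) ∧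
      (0 ≤ ⌊x * 2 ^ n⌋ ∧ ⌊x * 2 ^ n⌋ < 2 ^ n) := by
  have hpn := hp n
  have h0 : (0:ℝ) ≤ x * 2 ^ n := by positivity
  have h1 : x * 2 ^ n ≤ 2 ^ n := by nlinarith
  have hnn : 0 ≤ ⌊x * 2 ^ n⌋ := Int.floor_nonneg.2 h0
  have hfl : (⌊x * 2 ^ n⌋ : ℝ) ≠ x * 2 ^ n := by
    intro he
    apply h
    have hle : ⌊x * 2 ^ n⌋ ≤ (2 : ℤ) ^ n := by
      have : (⌊x * 2 ^ n⌋ : ℝ) ≤ ((2:ℤ) ^ n : ℤ) := by push_cast; linarith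
      exact_mod_cast this
    have hle' : ⌊x * 2 ^ n⌋.toNat ≤ 2 ^ n := by
      have h2 : ((2:ℤ) ^ n) = ((2 ^ n : ℕ) : ℤ) := by push_cast; ring
      rw [h2] at hle; omega
    refine ⟨⟨⌊x * 2 ^ n⌋.toNat, by omega⟩, ?_⟩
    have hc : ((⌊x * 2 ^ n⌋.toNat : ℕ) : ℝ) = (⌊x * 2 ^ n⌋ : ℝ) := by
      exact_mod_cast congrArg (Int.cast : ℤ → ℝ) (Int.toNat_of_nonneg hnn)
    rw [eq_div_iff hpn.ne']
    simp only [hc]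
    linarith
  have hlt : (⌊x * 2 ^ n⌋ : ℝ) < x * 2 ^ n := lt_of_le_of_ne (Int.floor_le _) hfl
  refine ⟨⟨hlt, Int.lt_floor_add_one _⟩, hnn, ?_⟩
  have : (⌊x * 2 ^ n⌋ : ℝ) < ((2:ℤ) ^ n : ℤ) := by push_cast; linarith
  exact_mod_cast this

open Classical in
noncomputable def face (n : ℕ) (x : ℝ) : Face n :=
  if h : Dy n x then .inr h.choose
  else .inl ⟨min ⌊x * 2 ^ n⌋.toNat (2 ^ n - 1), by
    have h2 : 0 < 2 ^ n := pow_pos (by norm_num) n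
    omega⟩

lemma face_dy {n : ℕ} {x : ℝ} (h : Dy n x) : realF n (face n x) = {x} := by
  rw [show face n x = .inr h.choose from dif_pos h, realF_inr]
  exact congrArg (fun y : ℝ => ({y} : Set ℝ)) h.choose_spec.symm

lemma face_cast {n : ℕ} {x : ℝ} (hx0 : 0 ≤ x) (hx1 : x ≤ 1) (h : ¬ Dy n x) :
    ∃ e : Fin (2 ^ n), face n x = .inl e ∧ ((e.1 : ℝ) = ⌊x * 2 ^ n⌋) := by
  obtain ⟨⟨hlt, hlt1⟩, hnn, hub⟩ := floor_lemmas hx0 hx1 h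
  refine ⟨_, by exact dif_neg h, ?_⟩
  have hInt : ((⌊x * 2 ^ n⌋.toNat : ℕ) : ℤ) = ⌊x * 2 ^ n⌋ := Int.toNat_of_nonneg hnn
  have hub' : ⌊x * 2 ^ n⌋.toNat < 2 ^ n := by
    have h2 : ((2:ℤ) ^ n) = ((2 ^ n : ℕ) : ℤ) := by push_cast; ring
    rw [h2] at hub; omega
  have hmin : min ⌊x * 2 ^ n⌋.toNat (2 ^ n - 1) = ⌊x * 2 ^ n⌋.toNat := by omega
  show ((min ⌊x * 2 ^ n⌋.toNat (2 ^ n - 1) : ℕ) : ℝ) = (⌊x * 2 ^ n⌋ : ℝ)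
  rw [hmin]
  exact_mod_cast congrArg (Int.cast : ℤ → ℝ) hInt

lemma mem_face {n : ℕ} {x : ℝ} (hx0 : 0 ≤ x) (hx1 : x ≤ 1) : x ∈ realF n (face n x) := by
  by_cases h : Dy n x
  · rw [face_dy h]; exact rfl
  · obtain ⟨e, he, hc⟩ := face_cast hx0 hx1 h
    obtain ⟨⟨hlt, hlt1⟩, _⟩ := floor_lemmas hx0 hx1 h
    rw [he, realF_inl, Set.mem_Icc]
    constructor
    · rw [div_le_iff₀ (hp n), hc]; linarith
    · rw [le_div_iff₀ (hp n), hc]; linarith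

lemma face_min {n : ℕ} {x : ℝ} (hx0 : 0 ≤ x) (hx1 : x ≤ 1) {f : Face n}
    (hf : x ∈ realF n f) : realF n (face n x) ⊆ realF n f := by
  by_cases h : Dy n x
  · rw [face_dy h]; simpa using hf
  · obtain ⟨e, he, hc⟩ := face_cast hx0 hx1 h
    obtain ⟨⟨hlt, hlt1⟩, _⟩ := floor_lemmas hx0 hx1 h
    rw [he, realF_inl]
    rcases face_cases f with ⟨e', rfl⟩ | ⟨v, rfl⟩
    · rw [realF_inl] at hf ⊢
      rw [Set.mem_Icc] at hf
      have h1 : (e'.1 : ℝ) ≤ x * 2 ^ n := by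
        have := hf.1; rw [div_le_iff₀ (hp n)] at this; linarith
      have h2 : x * 2 ^ n ≤ (e'.1 : ℝ) + 1 := by
        have := hf.2; rw [le_div_iff₀ (hp n)] at this; linarith
      have he1 : (e'.1 : ℝ) = (e.1 : ℝ) := by
        rw [hc]
        have ha : ((e'.1 : ℕ) : ℤ) ≤ ⌊x * 2 ^ n⌋ := Int.le_floor.2 (by push_cast; linarith)
        have hb : (⌊x * 2 ^ n⌋ : ℤ) < ((e'.1 : ℕ) : ℤ) + 1 := by
          have hr : (⌊x * 2 ^ n⌋ : ℝ) < ((e'.1 : ℕ) : ℝ) + 1 := by linarith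
          exact_mod_cast hr
        have : (⌊x * 2 ^ n⌋ : ℤ) = ((e'.1 : ℕ) : ℤ) := by omega
        exact_mod_cast this.symm
      rw [he1]
    · rw [realF_inr, Set.mem_singleton_iff] at hf
      exact absurd ⟨v, hf⟩ h

lemma dy_up {n : ℕ} {x : ℝ} (h : Dy n x) : Dy (n + 1) x := by
  obtain ⟨v, hv⟩ := h
  have hb : 2 * v.1 < 2 ^ (n + 1) + 1 := by
    have := v.2
    have h2 : 2 ^ (n + 1) = 2 ^ n * 2 := pow_succ 2 n
    omega
  refine ⟨⟨2 * v.1, hb⟩, ?_⟩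
  rw [hv]
  push_cast
  rw [pow_succ]
  ring

lemma face_coh {n : ℕ} {x : ℝ} (hx0 : 0 ≤ x) (hx1 : x ≤ 1) :
    realF (n + 1) (face (n + 1) x) ⊆ realF n (face n x) := by
  by_cases h : Dy (n + 1) x
  · rw [face_dy h]
    simpa using mem_face (n := n) hx0 hx1
  · have hn : ¬ Dy n x := fun hd => h (dy_up hd)
    obtain ⟨e', he', hc'⟩ := face_cast hx0 hx1 h
    obtain ⟨e, he, hc⟩ := face_cast hx0 hx1 hn
    obtain ⟨⟨hlt1, hlt1'⟩, _⟩ := floor_lemmas hx0 hx1 h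
    obtain ⟨⟨hlt, hlt'⟩, _⟩ := floor_lemmas hx0 hx1 hn
    rw [he, he', realF_inl, realF_inl]
    have hps : (2:ℝ) ^ (n + 1) = 2 ^ n * 2 := pow_succ 2 n
    have hxx : x * 2 ^ (n + 1) = x * 2 ^ n * 2 := by rw [hps]; ring
    have hA : 2 * ⌊x * 2 ^ n⌋ ≤ ⌊x * 2 ^ (n + 1)⌋ := by
      have hr : 2 * (⌊x * 2 ^ n⌋ : ℝ) < (⌊x * 2 ^ (n + 1)⌋ : ℝ) + 1 := by
        linarith [hlt, hlt1', hxx]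
      have : 2 * ⌊x * 2 ^ n⌋ < ⌊x * 2 ^ (n + 1)⌋ + 1 := by exact_mod_cast hr
      omega
    have hB : ⌊x * 2 ^ (n + 1)⌋ ≤ 2 * ⌊x * 2 ^ n⌋ + 1 := by
      have hr : (⌊x * 2 ^ (n + 1)⌋ : ℝ) < 2 * (⌊x * 2 ^ n⌋ : ℝ) + 2 := by
        linarith [hlt1, hlt', hxx]
      have : (⌊x * 2 ^ (n + 1)⌋ : ℤ) < 2 * ⌊x * 2 ^ n⌋ + 2 := by exact_mod_cast hr
      omega
    have hAr : 2 * (⌊x * 2 ^ n⌋ : ℝ) ≤ (⌊x * 2 ^ (n + 1)⌋ : ℝ) := by exact_mod_cast hA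
    have hBr : (⌊x * 2 ^ (n + 1)⌋ : ℝ) ≤ 2 * (⌊x * 2 ^ n⌋ : ℝ) + 1 := by exact_mod_cast hB
    apply Set.Icc_subset_Icc
    · rw [div_le_div_iff₀ (hp n) (hp (n + 1)), hc, hc']
      have heq : (⌊x * 2 ^ n⌋ : ℝ) * 2 ^ (n + 1) = 2 * (⌊x * 2 ^ n⌋ : ℝ) * 2 ^ n := by
        rw [hps]; ring
      have hmul := mul_le_mul_of_nonneg_right hAr (hp n).le
      linarith [heq, hmul]
    · rw [div_le_div_iff₀ (hp (n + 1)) (hp n), hc, hc']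
      have heq : ((⌊x * 2 ^ n⌋ : ℝ) + 1) * 2 ^ (n + 1) = (2 * (⌊x * 2 ^ n⌋ : ℝ) + 2) * 2 ^ n := by
        rw [hps]; ring
      have hmul := mul_le_mul_of_nonneg_right (by linarith [hBr] :
        (⌊x * 2 ^ (n + 1)⌋ : ℝ) + 1 ≤ 2 * (⌊x * 2 ^ n⌋ : ℝ) + 2) (hp n).le
      linarith [heq, hmul]

lemma realF_nonempty (n : ℕ) (f : Face n) : (realF n f).Nonempty := by
  rcases face_cases f with ⟨e, rfl⟩ | ⟨v, rfl⟩
  · rw [realF_inl]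
    exact Set.nonempty_Icc.2 (edge_le n _)
  · exact ⟨_, rfl⟩

lemma realF_subset_unit (n : ℕ) (f : Face n) : realF n f ⊆ Set.Icc 0 1 := by
  rcases face_cases f with ⟨e, rfl⟩ | ⟨v, rfl⟩
  · rw [realF_inl]
    apply Set.Icc_subset_Icc
    · positivity
    · rw [div_le_one (hp n)]
      have : ((e.1 : ℕ) : ℝ) + 1 ≤ ((2 ^ n : ℕ) : ℝ) := by exact_mod_cast e.2
      push_cast at this ⊢
      linarith
  · rw [realF_inr, Set.singleton_subset_iff, Set.mem_Icc]
    constructor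
    · positivity
    · rw [div_le_one (hp n)]
      have : ((v.1 : ℕ) : ℝ) ≤ ((2 ^ n : ℕ) : ℝ) := by exact_mod_cast Nat.lt_succ_iff.1 v.2
      push_cast at this ⊢
      linarith

lemma realF_isClosed (n : ℕ) (f : Face n) : IsClosed (realF n f) := by
  rcases face_cases f with ⟨e, rfl⟩ | ⟨v, rfl⟩
  · exact isClosed_Icc
  · exact isClosed_singleton

lemma realF_isCompact (n : ℕ) (f : Face n) : IsCompact (realF n f) := by
  rcases face_cases f with ⟨e, rfl⟩ | ⟨v, rfl⟩
  · exact isCompact_Icc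
  · exact isCompact_singleton

lemma realF_diam {n : ℕ} {f : Face n} {y z : ℝ} (hy : y ∈ realF n f) (hz : z ∈ realF n f) :
    |y - z| ≤ 1 / 2 ^ n := by
  rcases face_cases f with ⟨e, rfl⟩ | ⟨v, rfl⟩
  · rw [realF_inl, Set.mem_Icc] at hy hz
    have key : ((e.1 : ℝ) + 1) / 2 ^ n - (e.1 : ℝ) / 2 ^ n = 1 / 2 ^ n := by ring
    rw [abs_sub_le_iff]
    constructor <;> linarith [hy.1, hy.2, hz.1, hz.2]
  · rw [realF_inr, Set.mem_singleton_iff] at hy hz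
    rw [hy, hz, sub_self, abs_zero]
    positivity

lemma realF_inj {n : ℕ} {f g : Face n} (h : realF n f = realF n g) : f = g := by
  have edge_ne : ∀ (e : Fin (2 ^ n)) (v : Fin (2 ^ n + 1)),
      realF n (Sum.inl e) ≠ realF n (Sum.inr v) := by
    intro e v hev
    rw [realF_inl, realF_inr] at hev
    have hle : (e.1 : ℝ) / 2 ^ n ≤ ((e.1 : ℝ) + 1) / 2 ^ n := edge_le n _
    have h1 : (e.1 : ℝ) / 2 ^ n = (v.1 : ℝ) / 2 ^ n := by
      have := Set.left_mem_Icc.2 hle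
      rw [hev] at this; exact this
    have h2 : ((e.1 : ℝ) + 1) / 2 ^ n = (v.1 : ℝ) / 2 ^ n := by
      have := Set.right_mem_Icc.2 hle
      rw [hev] at this; exact this
    rw [div_eq_div_iff (hp n).ne' (hp n).ne'] at h1 h2
    nlinarith [hp n]
  rcases face_cases f with ⟨e, rfl⟩ | ⟨v, rfl⟩ <;> rcases face_cases g with ⟨e', rfl⟩ | ⟨v', rfl⟩
  · have h1 := h.le
    have h2 := h.ge
    rw [realF_inl, realF_inl] at h1 h2
    obtain ⟨ha, -⟩ := (Set.Icc_subset_Icc_iff (edge_le n _)).1 h1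
    obtain ⟨hc, -⟩ := (Set.Icc_subset_Icc_iff (edge_le n _)).1 h2
    rw [div_le_div_iff₀ (hp n) (hp n)] at ha hc
    have hr : (e.1 : ℝ) = (e'.1 : ℝ) := by nlinarith [hp n]
    have : e.1 = e'.1 := by exact_mod_cast hr
    exact congrArg Sum.inl (Fin.ext this)
  · exact absurd h (edge_ne _ _)
  · exact absurd h.symm (edge_ne _ _)
  · rw [realF_inr, realF_inr] at h
    have h1 : (v.1 : ℝ) / 2 ^ n = (v'.1 : ℝ) / 2 ^ n := Set.singleton_eq_singleton_iff.1 h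
    rw [div_eq_div_iff (hp n).ne' (hp n).ne'] at h1
    have hr : (v.1 : ℝ) = (v'.1 : ℝ) := by nlinarith [hp n]
    have : v.1 = v'.1 := by exact_mod_cast hr
    exact congrArg Sum.inr (Fin.ext this)

lemma eq_of_close {x c : ℝ} (h : ∀ m : ℕ, |x - c| ≤ 1 / 2 ^ m) : x = c := by
  by_contra hne
  have hpos : 0 < |x - c| := abs_pos.2 (sub_ne_zero.2 hne)
  obtain ⟨m, hm⟩ := exists_pow_lt_of_lt_one hpos (by norm_num : (1:ℝ) / 2 < 1)
  have h2 := h m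
  rw [div_pow, one_pow] at hm
  linarith

noncomputable def sigmaX (x : Set.Icc (0:ℝ) 1) : CLim :=
  ⟨fun n => face n x.1, fun n =>
    ⟨face_coh x.2.1 x.2.2, fun f hf =>
      face_min x.2.1 x.2.2 (hf (mem_face x.2.1 x.2.2))⟩⟩

lemma clim_nested (τ : CLim) (n m : ℕ) :
    realF (n + m) (τ.1 (n + m)) ⊆ realF n (τ.1 n) := by
  induction m with
  | zero => exact subset_rfl
  | succ m ih => exact ((τ.2 (n + m)).1).trans ih

lemma sigmaX_max (x : Set.Icc (0:ℝ) 1) : IsMaxPt (sigmaX x) := by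
  intro τ hτ
  have hx0 := x.2.1
  have hx1 := x.2.2
  apply Subtype.ext
  funext n
  have hn := hτ n
  show τ.1 n = face n x.1
  by_cases h : Dy n x.1
  · apply realF_inj
    rw [show (sigmaX x).1 n = face n x.1 from rfl, face_dy h] at hn
    rw [face_dy h]
    obtain ⟨y, hy⟩ := realF_nonempty n (τ.1 n)
    apply Set.eq_singleton_iff_nonempty_unique_mem.2 ⟨⟨y, hy⟩, fun z hz => hn hz⟩
  · obtain ⟨e, he, hc⟩ := face_cast hx0 hx1 h
    rw [show (sigmaX x).1 n = face n x.1 from rfl, he] at hn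
    rcases face_cases (τ.1 n) with ⟨e', he'⟩ | ⟨v, hv⟩
    · rw [he'] at hn ⊢
      rw [he]
      rw [realF_inl, realF_inl] at hn
      obtain ⟨ha, hb⟩ := (Set.Icc_subset_Icc_iff (edge_le n _)).1 hn
      rw [div_le_div_iff₀ (hp n) (hp n)] at ha hb
      have hr : (e'.1 : ℝ) = (e.1 : ℝ) := by nlinarith [hp n]
      have he2 : e'.1 = e.1 := by exact_mod_cast hr
      exact congrArg Sum.inl (Fin.ext he2)
    · exfalso
      set c : ℝ := (v.1 : ℝ) / 2 ^ n with hcdef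
      have hclose : ∀ m : ℕ, |x.1 - c| ≤ 1 / 2 ^ m := by
        intro m
        have hsub : realF (n + m) (τ.1 (n + m)) ⊆ {c} := by
          have := clim_nested τ n m
          rw [hv, realF_inr] at this
          exact this
        obtain ⟨y, hy⟩ := realF_nonempty (n + m) (τ.1 (n + m))
        have hyc : y = c := hsub hy
        have hcmem : c ∈ realF (n + m) (face (n + m) x.1) := by
          have := hτ (n + m) hy
          rw [hyc] at this
          exact this
        have hxmem : x.1 ∈ realF (n + m) (face (n + m) x.1) := mem_face hx0 hx1
        have hd := realF_diam hxmem hcmem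
        have hmono : (1:ℝ) / 2 ^ (n + m) ≤ 1 / 2 ^ m := by
          apply div_le_div_of_nonneg_left (by norm_num) (hp m)
          exact pow_le_pow_right₀ (by norm_num) (by omega)
        linarith
      exact h ⟨v, eq_of_close hclose⟩

noncomputable def toMax (x : Set.Icc (0:ℝ) 1) : {σ : CLim // IsMaxPt σ} :=
  ⟨sigmaX x, sigmaX_max x⟩

lemma toMax_inj : Function.Injective toMax := by
  intro x y hxy
  have hfaces : ∀ n, face n x.1 = face n y.1 := by
    intro n
    exact congrFun (congrArg Subtype.val (congrArg Subtype.val hxy)) n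
  apply Subtype.ext
  apply eq_of_close
  intro m
  have hx : x.1 ∈ realF m (face m x.1) := mem_face x.2.1 x.2.2
  have hy : y.1 ∈ realF m (face m x.1) := by
    rw [hfaces m]; exact mem_face y.2.1 y.2.2
  exact realF_diam hx hy

lemma toMax_surj : Function.Surjective toMax := by
  rintro ⟨σ, hmax⟩
  have hne : (⋂ n, realF n (σ.1 n)).Nonempty :=
    IsCompact.nonempty_iInter_of_sequence_nonempty_isCompact_isClosed
      (fun n => realF n (σ.1 n)) (fun n => (σ.2 n).1) (fun n => realF_nonempty _ _)
      (realF_isCompact _ _) (fun n => realF_isClosed _ _)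
  obtain ⟨x, hx⟩ := hne
  have hxm : ∀ n, x ∈ realF n (σ.1 n) := fun n => Set.mem_iInter.1 hx n
  have hx01 : x ∈ Set.Icc (0:ℝ) 1 := realF_subset_unit 0 _ (hxm 0)
  refine ⟨⟨x, hx01⟩, ?_⟩
  have hle : SpecLe σ (sigmaX ⟨x, hx01⟩) := fun n => face_min hx01.1 hx01.2 (hxm n)
  exact Subtype.ext (hmax _ hle)

end Stmt17Aux

open Stmt17Aux in
/-- The maximal points of `Ch^∞(I)` under the specialization order are in bijection with
the real interval `[0,1]`: each `x ∈ [0,1]` corresponds to the sequence `(σₙˣ)` where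
`σₙˣ` is the unique face of minimal dimension of the `n`-th barycentric subdivision whose
realization contains `x`. -/
theorem stmt17 :
    ∃ e : Set.Icc (0 : ℝ) 1 ≃ {σ : CLim // IsMaxPt σ},
      ∀ (x : Set.Icc (0 : ℝ) 1) (n : ℕ),
        (x : ℝ) ∈ realF n ((e x).1.1 n) ∧
        ∀ f : Face n, (x : ℝ) ∈ realF n f → realF n ((e x).1.1 n) ⊆ realF n f := by
  refine ⟨Equiv.ofBijective toMax ⟨toMax_inj, toMax_surj⟩, fun x n => ⟨?_, fun f hf => ?_⟩⟩
  · exact mem_face x.2.1 x.2.2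
  · exact face_min x.2.1 x.2.2 hf
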